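/- Let (y,x) be the incidence vector of a simple cycle C on vertex set W in a complete graph on V. Let ⟨H, {T_1,…,T_t}, L, R⟩ be a comb: t ≥ 3 odd, the T_i pairwise disjoint, each T_i intersects both H and V−H, L = {l_i} with l_i ∈ T_i ∩ H, R = {r_i} with r_i ∈ T_i − H. Then the comb inequality holds: x(δ(H)) + ∑_{j=1}^t x(δ(T_j)) − 2 y(R) − 2 y(L) ≥ 1 − t, where y(S) = ∑_{v∈S} y(v). -/

import Mathlib

open Finset
open scoped Classical

noncomputable section

variable {V : Type*} [Fintype V] [DecidableEq V]

/-- The set of edges of `G` with exactly one endpoint in `T` (the cut `δ(T)`). -/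
def cutEdges (G : SimpleGraph V) (T : Finset V) : Finset (Sym2 V) :=
  G.edgeFinset.filter fun e => (∃ a ∈ e, a ∈ T) ∧ (∃ b ∈ e, b ∉ T)

/-- The set of edges of `G` with both endpoints in `T` (denoted `E(T)`). -/
def innerEdges (G : SimpleGraph V) (T : Finset V) : Finset (Sym2 V) :=
  G.edgeFinset.filter fun e => ∀ a ∈ e, a ∈ T

/-- The set of edges of `G` incident to `v` (the star `δ(v)`). -/
def incEdges (G : SimpleGraph V) (v : V) : Finset (Sym2 V) :=
  G.edgeFinset.filter fun e => v ∈ e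

/-- `C` is the edge set of a simple cycle (a connected 2-regular graph) with vertex set `W`. -/
def IsCycleOn (C : Finset (Sym2 V)) (W : Finset V) : Prop :=
  3 ≤ W.card ∧ (∀ e ∈ C, ¬ e.IsDiag) ∧ (∀ e ∈ C, ∀ v ∈ e, v ∈ W) ∧
  (∀ v ∈ W, (C.filter fun e => v ∈ e).card = 2) ∧
  ((SimpleGraph.fromEdgeSet (↑C : Set (Sym2 V))).induce (↑W : Set V)).Connected

namespace CombAux

/-- cycle edges crossing `S` -/
def cut (C : Finset (Sym2 V)) (S : Finset V) : Finset (Sym2 V) :=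
  C.filter fun e => (∃ a ∈ e, a ∈ S) ∧ (∃ b ∈ e, b ∉ S)

/-- cycle edges inside `T` crossing `H` -/
def inH (C : Finset (Sym2 V)) (T H : Finset V) : Finset (Sym2 V) :=
  C.filter fun e => (∀ a ∈ e, a ∈ T) ∧ ((∃ a ∈ e, a ∈ H) ∧ (∃ b ∈ e, b ∉ H))

lemma cross_elim {e : Sym2 V} {S : Finset V}
    (h : (∃ a ∈ e, a ∈ S) ∧ (∃ b ∈ e, b ∉ S)) :
    ∃ u v, e = s(u, v) ∧ u ∈ S ∧ v ∉ S := by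
  induction e using Sym2.ind with
  | _ x y =>
    obtain ⟨⟨a, ha, haS⟩, ⟨b, hb, hbS⟩⟩ := h
    rw [Sym2.mem_iff] at ha hb
    rcases ha with rfl | rfl <;> rcases hb with rfl | rfl
    · exact absurd haS hbS
    · exact ⟨a, b, rfl, haS, hbS⟩
    · exact ⟨a, b, Sym2.eq_swap, haS, hbS⟩
    · exact absurd haS hbS

lemma handshake (C : Finset (Sym2 V)) (W : Finset V)
    (hnd : ∀ e ∈ C, ¬ e.IsDiag) (hvw : ∀ e ∈ C, ∀ v ∈ e, v ∈ W)
    (hdeg : ∀ v ∈ W, (C.filter fun e => v ∈ e).card = 2) (S : Finset V) :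
    2 * (S ∩ W).card =
      2 * (C.filter fun e => ∀ a ∈ e, a ∈ S).card + (cut C S).card := by
  have key : ∀ e ∈ C, ((S ∩ W).filter (· ∈ e)).card
      = (if ∀ a ∈ e, a ∈ S then 2 else 0) +
        (if (∃ a ∈ e, a ∈ S) ∧ (∃ b ∈ e, b ∉ S) then 1 else 0) := by
    intro e he
    induction e using Sym2.ind with
    | _ u v =>
      have huv : u ≠ v := by
        have := hnd _ he; simpa [Sym2.isDiag_iff_proj_eq] using this
      have huW : u ∈ W := hvw _ he u (Sym2.mem_mk_left u v)
      have hvW : v ∈ W := hvw _ he v (Sym2.mem_mk_right u v)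
      have hfe : ((S ∩ W).filter (· ∈ s(u,v))) = ({u, v} : Finset V).filter (· ∈ S) := by
        ext a
        simp only [mem_filter, mem_inter, Sym2.mem_iff, mem_insert, mem_singleton]
        constructor
        · rintro ⟨⟨haS, _⟩, h⟩; exact ⟨h, haS⟩
        · rintro ⟨h, haS⟩
          refine ⟨⟨haS, ?_⟩, h⟩
          rcases h with rfl | rfl
          · exact huW
          · exact hvW
      rw [hfe]
      by_cases huS : u ∈ S <;> by_cases hvS : v ∈ S <;>
        simp [filter_insert, filter_singleton, huS, hvS, huv, Sym2.mem_iff,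
          Finset.card_insert_of_notMem]
  have h1 : ∑ v ∈ S ∩ W, (C.filter fun e => v ∈ e).card = 2 * (S ∩ W).card := by
    rw [Finset.sum_congr rfl fun v hv => hdeg v (mem_inter.mp hv).2, Finset.sum_const,
      smul_eq_mul, mul_comm]
  have h2 : ∑ v ∈ S ∩ W, (C.filter fun e => v ∈ e).card
      = ∑ e ∈ C, ((S ∩ W).filter (· ∈ e)).card := by
    simp only [Finset.card_filter]
    exact Finset.sum_comm
  rw [← h1, h2, Finset.sum_congr rfl key, Finset.sum_add_distrib]
  congr 1
  · rw [← Finset.sum_filter, Finset.sum_const, smul_eq_mul, mul_comm]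
  · rw [← Finset.sum_filter, Finset.sum_const, smul_eq_mul, mul_one]
    rfl

lemma cut_nonempty (C : Finset (Sym2 V)) (W : Finset V) (hC : IsCycleOn C W)
    (S : Finset V) (h1 : ∃ w ∈ W, w ∈ S) (h2 : ∃ w ∈ W, w ∉ S) :
    (cut C S).Nonempty := by
  obtain ⟨u, huW, huS⟩ := h1
  obtain ⟨w, hwW, hwS⟩ := h2
  obtain ⟨-, -, -, -, hconn⟩ := hC
  have hu : (u : V) ∈ (↑W : Set V) := by exact_mod_cast huW
  have hw : (w : V) ∈ (↑W : Set V) := by exact_mod_cast hwW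
  obtain ⟨p⟩ := hconn.preconnected ⟨u, hu⟩ ⟨w, hw⟩
  obtain ⟨d, -, hd1, hd2⟩ := p.exists_boundary_dart {a | (a : V) ∈ S} huS hwS
  have hadj := d.adj
  rw [SimpleGraph.comap_adj, SimpleGraph.fromEdgeSet_adj] at hadj
  refine ⟨s((d.fst : V), (d.snd : V)), mem_filter.mpr ⟨by exact_mod_cast hadj.1,
    ⟨d.fst, Sym2.mem_mk_left _ _, hd1⟩, ⟨d.snd, Sym2.mem_mk_right _ _, hd2⟩⟩⟩

lemma two_le_cut (C : Finset (Sym2 V)) (W : Finset V) (hC : IsCycleOn C W)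
    (S : Finset V) (h1 : ∃ w ∈ W, w ∈ S) (h2 : ∃ w ∈ W, w ∉ S) :
    2 ≤ (cut C S).card := by
  have hne := cut_nonempty C W hC S h1 h2
  have hcard := Finset.card_pos.mpr hne
  have heven := handshake C W hC.2.1 hC.2.2.1 hC.2.2.2.1 S
  omega

lemma cut_inter_subset (C : Finset (Sym2 V)) (T H : Finset V) :
    cut C (T ∩ H) ⊆ cut C T ∪ inH C T H := by
  intro e he
  obtain ⟨heC, hcr⟩ := mem_filter.mp he
  obtain ⟨u, v, rfl, huS, hvS⟩ := cross_elim hcr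
  rw [mem_inter] at huS
  by_cases hvT : v ∈ T
  · refine mem_union_right _ (mem_filter.mpr ⟨heC, ?_, ⟨u, Sym2.mem_mk_left _ _, huS.2⟩,
      ⟨v, Sym2.mem_mk_right _ _, ?_⟩⟩)
    · intro a ha
      rw [Sym2.mem_iff] at ha
      rcases ha with rfl | rfl
      · exact huS.1
      · exact hvT
    · intro hvH; exact hvS (mem_inter.mpr ⟨hvT, hvH⟩)
  · exact mem_union_left _ (mem_filter.mpr ⟨heC, ⟨u, Sym2.mem_mk_left _ _, huS.1⟩,
      ⟨v, Sym2.mem_mk_right _ _, hvT⟩⟩)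

lemma cut_sdiff_subset (C : Finset (Sym2 V)) (T H : Finset V) :
    cut C (T \ H) ⊆ cut C T ∪ inH C T H := by
  intro e he
  obtain ⟨heC, hcr⟩ := mem_filter.mp he
  obtain ⟨u, v, rfl, huS, hvS⟩ := cross_elim hcr
  rw [mem_sdiff] at huS
  by_cases hvT : v ∈ T
  · have hvH : v ∈ H := by
      by_contra hvH
      exact hvS (mem_sdiff.mpr ⟨hvT, hvH⟩)
    refine mem_union_right _ (mem_filter.mpr ⟨heC, ?_, ⟨v, Sym2.mem_mk_right _ _, hvH⟩,
      ⟨u, Sym2.mem_mk_left _ _, huS.2⟩⟩)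
    intro a ha
    rw [Sym2.mem_iff] at ha
    rcases ha with rfl | rfl
    · exact huS.1
    · exact hvT
  · exact mem_union_left _ (mem_filter.mpr ⟨heC, ⟨u, Sym2.mem_mk_left _ _, huS.1⟩,
      ⟨v, Sym2.mem_mk_right _ _, hvT⟩⟩)

lemma cut_inter_inter_sdiff_subset (C : Finset (Sym2 V)) (T H : Finset V) :
    cut C (T ∩ H) ∩ cut C (T \ H) ⊆ inH C T H := by
  intro e he
  rw [mem_inter] at he
  obtain ⟨heC, hcr⟩ := mem_filter.mp he.1
  obtain ⟨u, v, rfl, huS, hvS⟩ := cross_elim hcr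
  rw [mem_inter] at huS
  obtain ⟨-, ⟨b, hb, hbS⟩, -⟩ := mem_filter.mp he.2
  rw [Sym2.mem_iff] at hb
  have hvTd : v ∈ T \ H := by
    rcases hb with rfl | rfl
    · rw [mem_sdiff] at hbS
      exact absurd huS.2 hbS.2
    · exact hbS
  rw [mem_sdiff] at hvTd
  refine mem_filter.mpr ⟨heC, ?_, ⟨u, Sym2.mem_mk_left _ _, huS.2⟩,
    ⟨v, Sym2.mem_mk_right _ _, hvTd.2⟩⟩
  intro a ha
  rw [Sym2.mem_iff] at ha
  rcases ha with rfl | rfl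
  · exact huS.1
  · exact hvTd.1

lemma inH_subset_cut (C : Finset (Sym2 V)) (T H : Finset V) :
    inH C T H ⊆ cut C H := by
  intro e he
  obtain ⟨heC, -, hcr⟩ := mem_filter.mp he
  exact mem_filter.mpr ⟨heC, hcr⟩

lemma cuts_le (C : Finset (Sym2 V)) (T H : Finset V) :
    (cut C (T ∩ H)).card + (cut C (T \ H)).card ≤ (cut C T).card + 2 * (inH C T H).card := by
  have h1 := Finset.card_union_add_card_inter (cut C (T ∩ H)) (cut C (T \ H))
  have h2 : (cut C (T ∩ H) ∪ cut C (T \ H)).card ≤ (cut C T ∪ inH C T H).card :=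
    Finset.card_le_card (Finset.union_subset (cut_inter_subset C T H) (cut_sdiff_subset C T H))
  have h3 : (cut C (T ∩ H) ∩ cut C (T \ H)).card ≤ (inH C T H).card :=
    Finset.card_le_card (cut_inter_inter_sdiff_subset C T H)
  have h4 := Finset.card_union_le (cut C T) (inH C T H)
  omega

lemma cut_inter_le (C : Finset (Sym2 V)) (T H : Finset V) :
    (cut C (T ∩ H)).card ≤ (cut C T).card + (inH C T H).card := by
  have h2 : (cut C (T ∩ H)).card ≤ (cut C T ∪ inH C T H).card :=
    Finset.card_le_card (cut_inter_subset C T H)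
  have h4 := Finset.card_union_le (cut C T) (inH C T H)
  omega

lemma sum_inH_le (C : Finset (Sym2 V)) (H : Finset V) {t : ℕ} (T : Fin t → Finset V)
    (hdisj : ∀ i j : Fin t, i ≠ j → Disjoint (T i) (T j)) :
    ∑ i : Fin t, (inH C (T i) H).card ≤ (cut C H).card := by
  rw [← Finset.card_biUnion]
  · apply Finset.card_le_card
    intro e he
    rw [Finset.mem_biUnion] at he
    obtain ⟨i, -, hi⟩ := he
    exact inH_subset_cut C (T i) H hi
  · intro i _ j _ hij
    show Disjoint (inH C (T i) H) (inH C (T j) H)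
    rw [Finset.disjoint_left]
    intro e he1 he2
    obtain ⟨-, hT1, -⟩ := mem_filter.mp he1
    obtain ⟨-, hT2, -⟩ := mem_filter.mp he2
    obtain ⟨a, ha⟩ : ∃ a, a ∈ e := by
      induction e using Sym2.ind with
      | _ x y => exact ⟨x, Sym2.mem_mk_left x y⟩
    exact Finset.disjoint_left.mp (hdisj i j hij) (hT1 a ha) (hT2 a ha)

end CombAux

/-- The comb inequality holds for the incidence vector of a simple cycle:
`x(δ(H)) + ∑ⱼ x(δ(Tⱼ)) − 2 y(R) − 2 y(L) ≥ 1 − t`. -/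
theorem cycle_satisfies_comb (C : Finset (Sym2 V)) (W : Finset V)
    (hC : IsCycleOn C W) (y : V → ℝ) (x : Sym2 V → ℝ)
    (hy : ∀ v, y v = if v ∈ W then 1 else 0)
    (hx : ∀ e, x e = if e ∈ C then 1 else 0)
    (H : Finset V) (t : ℕ) (ht3 : 3 ≤ t) (htodd : Odd t)
    (T : Fin t → Finset V)
    (hdisj : ∀ i j : Fin t, i ≠ j → Disjoint (T i) (T j))
    (hin : ∀ i, (T i ∩ H).Nonempty) (hout : ∀ i, (T i \ H).Nonempty)
    (l r : Fin t → V) (hl : ∀ i, l i ∈ T i ∩ H) (hr : ∀ i, r i ∈ T i \ H) :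
    (1 : ℝ) - t ≤
      (∑ e ∈ cutEdges (⊤ : SimpleGraph V) H, x e) +
        (∑ i : Fin t, ∑ e ∈ cutEdges (⊤ : SimpleGraph V) (T i), x e) -
        2 * (∑ i : Fin t, y (r i)) - 2 * (∑ i : Fin t, y (l i)) := by
  classical
  have hnd := hC.2.1
  set cH := (CombAux.cut C H).card with hcH
  set k : Fin t → ℕ := fun i => (CombAux.cut C (T i)).card with hk
  set ei : Fin t → ℕ := fun i => (CombAux.inH C (T i) H).card with heidef
  set aR := (univ.filter fun i : Fin t => r i ∈ W).card with haRdef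
  set aL := (univ.filter fun i : Fin t => l i ∈ W).card with haLdef
  -- reduction of real sums to cardinalities
  have hcutsum : ∀ S : Finset V, ∑ e ∈ cutEdges (⊤ : SimpleGraph V) S, x e
      = ((CombAux.cut C S).card : ℝ) := by
    intro S
    have heq : (cutEdges (⊤ : SimpleGraph V) S).filter (fun e => e ∈ C) = CombAux.cut C S := by
      ext e
      simp only [cutEdges, CombAux.cut, mem_filter, SimpleGraph.mem_edgeFinset,
        SimpleGraph.edgeSet_top, Set.mem_setOf_eq]
      constructor
      · rintro ⟨⟨_, h⟩, hc⟩; exact ⟨hc, h⟩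
      · rintro ⟨hc, h⟩; exact ⟨⟨hnd e hc, h⟩, hc⟩
    rw [Finset.sum_congr rfl fun e _ => hx e, Finset.sum_boole, heq]
  have hyR : ∑ i : Fin t, y (r i) = (aR : ℝ) := by
    rw [Finset.sum_congr rfl fun i _ => hy (r i), Finset.sum_boole, haRdef]
  have hyL : ∑ i : Fin t, y (l i) = (aL : ℝ) := by
    rw [Finset.sum_congr rfl fun i _ => hy (l i), Finset.sum_boole, haLdef]
  -- the key combinatorial inequality over ℕ
  have key : 2 * aR + 2 * aL + 1 ≤ cH + (∑ i : Fin t, k i) + t := by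
    have hevenH := CombAux.handshake C W hC.2.1 hC.2.2.1 hC.2.2.2.1 H
    by_cases hB : ∀ i, ∃ w ∈ W, w ∉ T i
    · -- no tooth contains all of W
      have tooth : ∀ i : Fin t,
          2 * ((if r i ∈ W then 1 else 0) + (if l i ∈ W then 1 else 0))
            ≤ k i + 2 * min (ei i) 1 := by
        intro i
        obtain ⟨hlT, hlH⟩ := mem_inter.mp (hl i)
        obtain ⟨hrT, hrH⟩ := mem_sdiff.mp (hr i)
        by_cases hlW : l i ∈ W <;> by_cases hrW : r i ∈ W
        · by_cases he0 : ei i = 0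
          · have h1 : 2 ≤ (CombAux.cut C (T i ∩ H)).card :=
              CombAux.two_le_cut C W hC _ ⟨l i, hlW, mem_inter.mpr ⟨hlT, hlH⟩⟩
                ⟨r i, hrW, fun hmem => hrH (mem_inter.mp hmem).2⟩
            have h2 : 2 ≤ (CombAux.cut C (T i \ H)).card :=
              CombAux.two_le_cut C W hC _ ⟨r i, hrW, mem_sdiff.mpr ⟨hrT, hrH⟩⟩
                ⟨l i, hlW, fun hmem => (mem_sdiff.mp hmem).2 hlH⟩
            have h3 := CombAux.cuts_le C (T i) H
            simp only [hlW, hrW, if_true]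
            simp only [hk, heidef] at *
            omega
          · have h1 : 2 ≤ k i := CombAux.two_le_cut C W hC (T i) ⟨l i, hlW, hlT⟩ (hB i)
            simp only [hlW, hrW, if_true]
            omega
        · have h1 : 2 ≤ k i := CombAux.two_le_cut C W hC (T i) ⟨l i, hlW, hlT⟩ (hB i)
          simp only [hlW, hrW, if_true, if_false]
          omega
        · have h1 : 2 ≤ k i := CombAux.two_le_cut C W hC (T i) ⟨r i, hrW, hrT⟩ (hB i)
          simp only [hlW, hrW, if_true, if_false]
          omega
        · simp only [hlW, hrW, if_false]
          omega
      have hsum := Finset.sum_le_sum (fun i (_ : i ∈ (univ : Finset (Fin t))) => tooth i)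
      have hdistrib : ∑ i : Fin t,
          (2 * ((if r i ∈ W then 1 else 0) + (if l i ∈ W then 1 else 0)))
          = 2 * aR + 2 * aL := by
        rw [haRdef, haLdef, Finset.card_filter, Finset.card_filter]
        simp only [mul_add, Finset.sum_add_distrib, Finset.mul_sum]
      have hdistrib2 : ∑ i : Fin t, (k i + 2 * min (ei i) 1)
          = (∑ i : Fin t, k i) + 2 * (∑ i : Fin t, min (ei i) 1) := by
        simp only [Finset.sum_add_distrib, Finset.mul_sum]
      rw [hdistrib, hdistrib2] at hsum
      have hs1 : (∑ i : Fin t, min (ei i) 1) ≤ ∑ i : Fin t, ei i :=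
        Finset.sum_le_sum fun i _ => min_le_left _ _
      have hs2 : (∑ i : Fin t, ei i) ≤ cH := by
        rw [heidef, hcH]
        exact CombAux.sum_inH_le C H T hdisj
      have hs3 : (∑ i : Fin t, min (ei i) 1) ≤ t := by
        have := Finset.sum_le_card_nsmul (univ : Finset (Fin t))
          (fun i => min (ei i) 1) 1 (fun i _ => min_le_right _ _)
        simpa using this
      obtain ⟨m, hm⟩ := htodd
      omega
    · -- some tooth contains all of W
      push_neg at hB
      obtain ⟨i₀, hWT⟩ := hB
      have hjl : ∀ j : Fin t, l j ∈ W → j = i₀ := by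
        intro j hj
        by_contra hne
        exact Finset.disjoint_left.mp (hdisj j i₀ hne) (mem_inter.mp (hl j)).1 (hWT _ hj)
      have hjr : ∀ j : Fin t, r j ∈ W → j = i₀ := by
        intro j hj
        by_contra hne
        exact Finset.disjoint_left.mp (hdisj j i₀ hne) (mem_sdiff.mp (hr j)).1 (hWT _ hj)
      have haL : aL ≤ 1 := by
        have hsub : (univ.filter fun i : Fin t => l i ∈ W) ⊆ {i₀} := fun j hj =>
          mem_singleton.mpr (hjl j (mem_filter.mp hj).2)
        simpa using Finset.card_le_card hsub
      have haR : aR ≤ 1 := by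
        have hsub : (univ.filter fun i : Fin t => r i ∈ W) ⊆ {i₀} := fun j hj =>
          mem_singleton.mpr (hjr j (mem_filter.mp hj).2)
        simpa using Finset.card_le_card hsub
      have hki : k i₀ ≤ ∑ i : Fin t, k i :=
        Finset.single_le_sum (fun i _ => Nat.zero_le _) (mem_univ i₀)
      by_cases h1 : 1 ≤ aL <;> by_cases h2 : 1 ≤ aR
      · have hlW : l i₀ ∈ W := by
          obtain ⟨j, hj⟩ := Finset.card_pos.mp h1
          have hjW := (mem_filter.mp hj).2
          obtain rfl := hjl j hjW
          exact hjW
        have hrW : r i₀ ∈ W := by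
          obtain ⟨j, hj⟩ := Finset.card_pos.mp h2
          have hjW := (mem_filter.mp hj).2
          obtain rfl := hjr j hjW
          exact hjW
        obtain ⟨hlT, hlH⟩ := mem_inter.mp (hl i₀)
        obtain ⟨hrT, hrH⟩ := mem_sdiff.mp (hr i₀)
        have hc1 : 2 ≤ (CombAux.cut C (T i₀ ∩ H)).card :=
          CombAux.two_le_cut C W hC _ ⟨l i₀, hlW, mem_inter.mpr ⟨hlT, hlH⟩⟩
            ⟨r i₀, hrW, fun hmem => hrH (mem_inter.mp hmem).2⟩
        have hc2 := CombAux.cut_inter_le C (T i₀) H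
        have hc3 : ei i₀ ≤ cH := by
          rw [heidef, hcH]
          exact Finset.card_le_card (CombAux.inH_subset_cut C (T i₀) H)
        simp only [hk, heidef, hcH] at *
        omega
      · omega
      · omega
      · omega
  have keyR : (2 * aR + 2 * aL + 1 : ℝ) ≤ (cH : ℝ) + (∑ i : Fin t, (k i : ℝ)) + t := by
    exact_mod_cast key
  rw [hcutsum H, Finset.sum_congr rfl fun i (_ : i ∈ (univ : Finset (Fin t))) => hcutsum (T i),
    hyR, hyL]
  push_cast at keyR ⊢
  linarith
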